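/- Suppose det(W) ≠ 0 and rank₂(W) = ⌈n/2⌉. Let W₁ be the n×n integer matrix with columns A^{2j} e for j = 0, 1, …, n−1. Assume that every entry of Wᵀ W₁ is even, and that every vector x ∈ 𝔽₂ⁿ satisfying ((Wᵀ W₁)/2 reduced mod 2) · x = 0 also satisfies (W reduced mod 2) · x = 0. If Q belongs to Q_G and has level ℓ, then ℓ is odd. -/

import Mathlib

open Matrix

section Aux

variable {n : ℕ}

/-- quadratic form of a symmetric zero-diagonal integer matrix is even -/
private lemma even_quad (S : Matrix (Fin n) (Fin n) ℤ)
    (hs : ∀ i j, S i j = S j i) (hd : ∀ i, S i i = 0) (v : Fin n → ℤ) :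
    Even (v ⬝ᵥ S.mulVec v) := by
  rw [even_iff_two_dvd]
  have key : ((v ⬝ᵥ S.mulVec v : ℤ) : ZMod 2) = 0 → (2:ℤ) ∣ v ⬝ᵥ S.mulVec v := by
    intro h
    have := (ZMod.intCast_zmod_eq_zero_iff_dvd (v ⬝ᵥ S.mulVec v) 2).mp h
    exact_mod_cast this
  apply key
  have hexp : ((v ⬝ᵥ S.mulVec v : ℤ) : ZMod 2)
      = ∑ p : Fin n × Fin n,
          ((v p.1 : ZMod 2) * (S p.1 p.2 : ZMod 2) * (v p.2 : ZMod 2)) := by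
    rw [Fintype.sum_prod_type]
    simp only [dotProduct, mulVec, dotProduct, Finset.mul_sum]
    push_cast
    ring_nf
  rw [hexp]
  apply Finset.sum_involution (fun p _ => (p.2, p.1))
  · intro p _
    have hswap : ((v p.2 : ZMod 2) * (S p.2 p.1 : ZMod 2) * (v p.1 : ZMod 2))
        = ((v p.1 : ZMod 2) * (S p.1 p.2 : ZMod 2) * (v p.2 : ZMod 2)) := by
      rw [hs p.2 p.1]; ring
    rw [hswap]
    exact CharTwo.add_self_eq_zero _
  · intro p _ hne heq
    apply hne
    have h1 : p.2 = p.1 := congrArg Prod.fst heq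
    rw [h1, hd p.1]
    push_cast
    ring
  · intro p _; exact Finset.mem_univ _
  · intro p _; rfl

end Aux

/-- If `rank₂(W) = ⌈n/2⌉`, `WᵀW₁` has even entries, and the kernel
of `(WᵀW₁)/2` mod 2 is contained in the kernel of `W` mod 2, then the level of
any `Q ∈ Q_G` is odd. -/
theorem stmt_16 (n : ℕ) (hn : 0 < n)
    (A : Matrix (Fin n) (Fin n) ℤ)
    (hA_symm : Aᵀ = A)
    (hA_diag : ∀ i, A i i = 0)
    (hA_01 : ∀ i j, A i j = 0 ∨ A i j = 1)
    (W : Matrix (Fin n) (Fin n) ℤ)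
    (hW : W = Matrix.of fun (i j : Fin n) => (A ^ (j : ℕ)).mulVec (fun _ => (1 : ℤ)) i)
    (hdet : W.det ≠ 0)
    (hrank : (W.map (Int.cast : ℤ → ZMod 2)).rank = (n + 1) / 2)
    (W₁ : Matrix (Fin n) (Fin n) ℤ)
    (hW₁ : W₁ = Matrix.of fun (i j : Fin n) =>
      (A ^ (2 * (j : ℕ))).mulVec (fun _ => (1 : ℤ)) i)
    (hEven : ∀ i j, Even ((Wᵀ * W₁) i j))
    (hker : ∀ x : Fin n → ZMod 2,
      ((Matrix.of fun (i j : Fin n) => (Wᵀ * W₁) i j / 2).map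
        (Int.cast : ℤ → ZMod 2)).mulVec x = 0 →
      (W.map (Int.cast : ℤ → ZMod 2)).mulVec x = 0)
    (Q : Matrix (Fin n) (Fin n) ℚ)
    (hQ_orth : Qᵀ * Q = 1)
    (hQ_e : Q.mulVec (fun _ => (1 : ℚ)) = (fun _ => (1 : ℚ)))
    (hQ_symm : (Qᵀ * A.map (Int.cast : ℤ → ℚ) * Q)ᵀ = Qᵀ * A.map (Int.cast : ℤ → ℚ) * Q)
    (hQ_diag : ∀ i, (Qᵀ * A.map (Int.cast : ℤ → ℚ) * Q) i i = 0)
    (hQ_01 : ∀ i j, (Qᵀ * A.map (Int.cast : ℤ → ℚ) * Q) i j = 0 ∨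
      (Qᵀ * A.map (Int.cast : ℤ → ℚ) * Q) i j = 1)
    (ℓ : ℕ) (hℓ_pos : 0 < ℓ)
    (hℓ_int : ∀ i j, ∃ z : ℤ, (ℓ : ℚ) * Q i j = (z : ℚ))
    (hℓ_min : ∀ m : ℕ, 0 < m → (∀ i j, ∃ z : ℤ, (m : ℚ) * Q i j = (z : ℚ)) → ℓ ≤ m) :
    Odd ℓ := by
  classical
  by_contra hodd
  have hEvℓ : Even ℓ := Nat.not_odd_iff_even.mp hodd
  obtain ⟨d, hd2⟩ := hEvℓ
  -- notation
  set eZ : Fin n → ℤ := fun _ => 1 with heZ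
  set eQ : Fin n → ℚ := fun _ => 1 with heQ
  set a : ℕ → ℤ := fun t => eZ ⬝ᵥ (A ^ t).mulVec eZ with ha_def
  -- symmetric powers
  have hApow_symm : ∀ t : ℕ, (A ^ t)ᵀ = A ^ t := by
    intro t; rw [transpose_pow, hA_symm]
  have hvecMul : ∀ (t : ℕ) (x : Fin n → ℤ), Matrix.vecMul x (A ^ t) = (A ^ t).mulVec x := by
    intro t x
    conv_lhs => rw [← hApow_symm t]
    rw [vecMul_transpose]
  -- dot products of walk vectors
  have hdot : ∀ s t : ℕ, ((A ^ s).mulVec eZ) ⬝ᵥ ((A ^ t).mulVec eZ) = a (s + t) := by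
    intro s t
    symm
    rw [ha_def]
    simp only
    rw [pow_add, ← mulVec_mulVec, dotProduct_mulVec, hvecMul s eZ]
  -- symmetric dot swap
  have hswapdot : ∀ (t : ℕ) (x y : Fin n → ℤ),
      x ⬝ᵥ (A ^ t).mulVec y = y ⬝ᵥ (A ^ t).mulVec x := by
    intro t x y
    rw [dotProduct_mulVec, hvecMul t x, dotProduct_comm]
  -- n is even
  have hn_even : Even (n : ℤ) := by
    have h00 := hEven ⟨0, hn⟩ ⟨0, hn⟩
    have hval : (Wᵀ * W₁) ⟨0, hn⟩ ⟨0, hn⟩ = (n : ℤ) := by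
      rw [mul_apply]
      have h1 : ∀ k : Fin n, W k ⟨0, hn⟩ = 1 := by
        intro k
        rw [hW]
        show (A ^ ((⟨0, hn⟩ : Fin n) : ℕ)).mulVec (fun _ => (1:ℤ)) k = 1
        norm_num [one_mulVec]
      have h2 : ∀ k : Fin n, W₁ k ⟨0, hn⟩ = 1 := by
        intro k
        rw [hW₁]
        show (A ^ (2 * ((⟨0, hn⟩ : Fin n) : ℕ))).mulVec (fun _ => (1:ℤ)) k = 1
        norm_num [one_mulVec]
      simp only [transpose_apply, h1, h2, one_mul, Finset.sum_const, Finset.card_univ,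
        Fintype.card_fin, nsmul_eq_mul, mul_one]
    rw [hval] at h00
    exact h00
  -- all walk counts are even
  have hsqsub : ∀ x : ℤ, Even (x * x - x) := by
    intro x
    have : x * x - x = (x - 1) * ((x - 1) + 1) := by ring
    rw [this]
    exact Int.even_mul_succ_self _
  have ha_even : ∀ t, Even (a t) := by
    intro t
    induction t using Nat.strong_induction_on with
    | _ t ih =>
      rcases Nat.even_or_odd t with he | ho
      · obtain ⟨s, hs⟩ := he
        rcases Nat.eq_zero_or_pos s with h0 | hpos
        · have ht0 : t = 0 := by omega
          have : a t = (n : ℤ) := by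
            rw [ha_def, ht0]
            simp [one_mulVec, dotProduct, heZ]
          rw [this]; exact hn_even
        · have hst : s < t := by omega
          have hv : a t = ((A ^ s).mulVec eZ) ⬝ᵥ ((A ^ s).mulVec eZ) := by
            rw [hs]; exact (hdot s s).symm
          have has : a s = eZ ⬝ᵥ ((A ^ s).mulVec eZ) := rfl
          have hdiff : Even (a t - a s) := by
            rw [hv, has]
            simp only [dotProduct, heZ, one_mul]
            rw [← Finset.sum_sub_distrib]
            have : ∀ i ∈ Finset.univ, (2:ℤ) ∣ ((A ^ s).mulVec (fun _ => (1:ℤ)) i *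
                (A ^ s).mulVec (fun _ => (1:ℤ)) i - (A ^ s).mulVec (fun _ => (1:ℤ)) i) := by
              intro i _
              rw [← even_iff_two_dvd]
              exact hsqsub _
            rw [even_iff_two_dvd]
            exact Finset.dvd_sum this
          have := (ih s hst).add hdiff
          have harr : a s + (a t - a s) = a t := by ring
          rwa [harr] at this
      · obtain ⟨s, hs⟩ := ho
        have hv : a t = ((A ^ s).mulVec eZ) ⬝ᵥ A.mulVec ((A ^ s).mulVec eZ) := by
          have h1 : t = s + (1 + s) := by omega
          rw [h1, ← hdot s (1 + s)]
          congr 1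
          rw [pow_add, pow_one, ← mulVec_mulVec]
        rw [hv]
        exact even_quad A (fun i j => congrFun (congrFun hA_symm j) i) hA_diag _
  have ha2 : ∀ s, a s = 2 * (a s / 2) :=
    fun s => (Int.mul_ediv_cancel' (even_iff_two_dvd.mp (ha_even s))).symm
  -- the integer matrix M = ℓ • Q
  set M : Matrix (Fin n) (Fin n) ℤ :=
    Matrix.of (fun i j => Classical.choose (hℓ_int i j)) with hM_def
  have hM : ∀ i j, ((M i j : ℤ) : ℚ) = (ℓ : ℚ) * Q i j := by
    intro i j
    exact (Classical.choose_spec (hℓ_int i j)).symm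
  -- M has an odd entry
  have hModd : ∃ i j, ¬ ((2:ℤ) ∣ M i j) := by
    by_contra hcon
    push_neg at hcon
    have hdpos : 0 < d := by omega
    have hint : ∀ i j, ∃ z : ℤ, (d : ℚ) * Q i j = (z : ℚ) := by
      intro i j
      obtain ⟨w, hw⟩ := hcon i j
      refine ⟨w, ?_⟩
      have h1 : ((M i j : ℤ) : ℚ) = (ℓ : ℚ) * Q i j := hM i j
      have h2 : (ℓ : ℚ) = 2 * (d : ℚ) := by
        rw [hd2]; push_cast; ring
      have h3 : ((M i j : ℤ) : ℚ) = 2 * (w : ℚ) := by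
        rw [hw]; push_cast; ring
      have h4 : 2 * (d : ℚ) * Q i j = 2 * (w : ℚ) := by
        rw [← h2, ← h1, h3]
      have := mul_left_cancel₀ (two_ne_zero (α := ℚ)) (by linarith [h4] : (2:ℚ) * ((d:ℚ) * Q i j) = 2 * (w:ℚ))
      exact this
    have := hℓ_min d hdpos hint
    omega
  -- the integer matrix B with B.map = QᵀAQ
  set B : Matrix (Fin n) (Fin n) ℤ :=
    Matrix.of (fun i j => if (Qᵀ * A.map (Int.cast : ℤ → ℚ) * Q) i j = 1 then (1:ℤ) else 0)
      with hB_def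
  have hB : B.map (Int.cast : ℤ → ℚ) = Qᵀ * A.map (Int.cast : ℤ → ℚ) * Q := by
    ext i j
    show (((if (Qᵀ * A.map (Int.cast : ℤ → ℚ) * Q) i j = 1 then (1:ℤ) else 0) : ℤ) : ℚ)
      = (Qᵀ * A.map (Int.cast : ℤ → ℚ) * Q) i j
    rcases hQ_01 i j with h | h
    · simp [h]
    · simp [h]
  have hQQT : Q * Qᵀ = 1 := mul_eq_one_comm.mp hQ_orth
  -- casting helpers
  have cast_mm : ∀ (X Y : Matrix (Fin n) (Fin n) ℤ),
      (X * Y).map (Int.cast : ℤ → ℚ) = X.map (Int.cast : ℤ → ℚ) * Y.map (Int.cast : ℤ → ℚ) := by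
    intro X Y
    ext i j
    simp only [Matrix.map_apply, mul_apply]
    push_cast
    rfl
  have cast_pow : ∀ (X : Matrix (Fin n) (Fin n) ℤ) (t : ℕ),
      (X ^ t).map (Int.cast : ℤ → ℚ) = (X.map (Int.cast : ℤ → ℚ)) ^ t := by
    intro X t
    induction t with
    | zero =>
      simp only [pow_zero]
      ext i j
      simp [Matrix.map_apply, Matrix.one_apply, apply_ite (Int.cast : ℤ → ℚ)]
    | succ t iht =>
      rw [pow_succ, pow_succ, cast_mm, iht]
  have cast_mulVec_rat : ∀ (X : Matrix (Fin n) (Fin n) ℤ) (v : Fin n → ℤ) (i : Fin n),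
      ((X.mulVec v i : ℤ) : ℚ) =
        (X.map (Int.cast : ℤ → ℚ)).mulVec (fun j => ((v j : ℚ))) i := by
    intro X v i
    simp only [mulVec, dotProduct, Matrix.map_apply]
    push_cast
    rfl
  have cast_mulVec_z2 : ∀ (X : Matrix (Fin n) (Fin n) ℤ) (v : Fin n → ℤ) (i : Fin n),
      ((X.mulVec v i : ℤ) : ZMod 2) =
        (X.map (Int.cast : ℤ → ZMod 2)).mulVec (fun j => ((v j : ZMod 2))) i := by
    intro X v i
    simp only [mulVec, dotProduct, Matrix.map_apply]
    push_cast
    rfl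
  have cast_mm2 : ∀ (X Y : Matrix (Fin n) (Fin n) ℤ),
      (X * Y).map (Int.cast : ℤ → ZMod 2) =
        X.map (Int.cast : ℤ → ZMod 2) * Y.map (Int.cast : ℤ → ZMod 2) := by
    intro X Y
    ext i j
    simp only [Matrix.map_apply, mul_apply]
    push_cast
    rfl
  -- Qᵀ e = e
  have hQte : Qᵀ.mulVec eQ = eQ := by
    conv_lhs => rw [← hQ_e]
    rw [mulVec_mulVec, hQ_orth, one_mulVec]
  set Xq : Matrix (Fin n) (Fin n) ℚ := A.map (Int.cast : ℤ → ℚ) with hXq_def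
  set Bq : Matrix (Fin n) (Fin n) ℚ := Qᵀ * Xq * Q with hBq_def
  -- Qᵀ Xq^t Q = Bq^t
  have hpow : ∀ t : ℕ, Qᵀ * Xq ^ t * Q = Bq ^ t := by
    intro t
    induction t with
    | zero => simp [hQ_orth]
    | succ t iht =>
      have step : Qᵀ * Xq ^ (t+1) * Q = (Qᵀ * Xq ^ t * Q) * (Qᵀ * Xq * Q) := by
        calc Qᵀ * Xq ^ (t+1) * Q = Qᵀ * (Xq ^ t * Xq) * Q := by rw [pow_succ]
        _ = Qᵀ * Xq ^ t * (Xq * Q) := by simp only [Matrix.mul_assoc]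
        _ = Qᵀ * Xq ^ t * ((Q * Qᵀ) * (Xq * Q)) := by rw [hQQT, Matrix.one_mul]
        _ = (Qᵀ * Xq ^ t * Q) * (Qᵀ * (Xq * Q)) := by simp only [Matrix.mul_assoc]
        _ = (Qᵀ * Xq ^ t * Q) * (Qᵀ * Xq * Q) := by simp only [Matrix.mul_assoc]
      rw [step, iht, ← hBq_def, pow_succ]
  -- Qᵀ (Xq^t e) = Bq^t e
  have hQWcol : ∀ t : ℕ, Qᵀ.mulVec ((Xq ^ t).mulVec eQ) = (Bq ^ t).mulVec eQ := by
    intro t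
    induction t with
    | zero => simp only [pow_zero, one_mulVec, hQte]
    | succ t iht =>
      have h1 : (Xq ^ (t+1)).mulVec eQ = Xq.mulVec ((Xq ^ t).mulVec eQ) := by
        rw [mulVec_mulVec, ← pow_succ']
      rw [h1, mulVec_mulVec]
      have h2 : Qᵀ * Xq = Bq * Qᵀ := by
        calc Qᵀ * Xq = Qᵀ * Xq * (Q * Qᵀ) := by rw [hQQT, Matrix.mul_one]
        _ = (Qᵀ * Xq * Q) * Qᵀ := by simp only [Matrix.mul_assoc]
        _ = Bq * Qᵀ := by rw [← hBq_def]
      rw [h2, ← mulVec_mulVec, iht, mulVec_mulVec, ← pow_succ']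
  -- columns of W cast to ℚ
  have hWcol : ∀ j : Fin n, (fun k => ((W k j : ℤ) : ℚ)) = (Xq ^ (j:ℕ)).mulVec eQ := by
    intro j
    funext k
    rw [hW]
    show (((A ^ (j:ℕ)).mulVec eZ k : ℤ) : ℚ) = _
    rw [cast_mulVec_rat, cast_pow]
    rfl
  -- Mᵀ W = ℓ (walk matrix of B)
  have hMWint : ∀ i j, (Mᵀ * W) i j = (ℓ : ℤ) * ((B ^ (j:ℕ)).mulVec eZ) i := by
    intro i j
    apply (Int.cast_injective (α := ℚ))
    have lhs1 : (((Mᵀ * W) i j : ℤ) : ℚ) = ∑ k, ((M k i : ℚ)) * ((W k j : ℚ)) := by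
      rw [mul_apply]
      push_cast
      rfl
    rw [lhs1]
    have lhs2 : ∑ k, ((M k i : ℚ)) * ((W k j : ℚ))
        = (ℓ : ℚ) * ∑ k, Q k i * ((Xq ^ (j:ℕ)).mulVec eQ k) := by
      rw [Finset.mul_sum]
      apply Finset.sum_congr rfl
      intro k _
      rw [hM k i]
      have : ((W k j : ℤ) : ℚ) = (Xq ^ (j:ℕ)).mulVec eQ k := congrFun (hWcol j) k
      rw [this]
      ring
    rw [lhs2]
    have lhs3 : ∑ k, Q k i * ((Xq ^ (j:ℕ)).mulVec eQ k)
        = Qᵀ.mulVec ((Xq ^ (j:ℕ)).mulVec eQ) i := by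
      simp only [mulVec, dotProduct, transpose_apply]
    rw [lhs3, hQWcol]
    have lhs4 : (Bq ^ (j:ℕ)).mulVec eQ i = (((B ^ (j:ℕ)).mulVec eZ i : ℤ) : ℚ) := by
      rw [cast_mulVec_rat, cast_pow, hB]
      rfl
    rw [lhs4]
    push_cast
    ring
  -- Mᵀ A^t M = ℓ² B^t
  have hMq : M.map (Int.cast : ℤ → ℚ) = (ℓ : ℚ) • Q := by
    ext i j
    rw [Matrix.map_apply, hM i j, Matrix.smul_apply, smul_eq_mul]
  have hMAMint : ∀ (t : ℕ) (p q : Fin n),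
      (Mᵀ * A ^ t * M) p q = (ℓ : ℤ)^2 * (B ^ t) p q := by
    intro t p q
    apply (Int.cast_injective (α := ℚ))
    have hmap : (Mᵀ * A ^ t * M).map (Int.cast : ℤ → ℚ)
        = ((ℓ:ℚ)^2) • (Bq ^ t) := by
      rw [cast_mm, cast_mm, Matrix.transpose_map, hMq, cast_pow]
      simp only [Matrix.transpose_smul, Matrix.smul_mul, Matrix.mul_smul, smul_smul]
      rw [hpow t, sq]
    have h1 : (((Mᵀ * A ^ t * M) p q : ℤ) : ℚ)
        = ((Mᵀ * A ^ t * M).map (Int.cast : ℤ → ℚ)) p q := rfl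
    rw [h1, hmap]
    have h2 : (Bq ^ t) = (B ^ t).map (Int.cast : ℤ → ℚ) := by
      rw [cast_pow, hB]
    rw [h2]
    show (ℓ:ℚ)^2 * (((B ^ t) p q : ℤ) : ℚ) = _
    push_cast
    ring
  -- entries of WᵀW and WᵀW₁ are walk counts
  have hWtW : ∀ i j : Fin n, (Wᵀ * W) i j = a ((i:ℕ) + (j:ℕ)) := by
    intro i j
    rw [mul_apply, ← hdot (i:ℕ) (j:ℕ)]
    apply Finset.sum_congr rfl
    intro k _
    rw [transpose_apply, hW]
    rfl
  have hWtW1 : ∀ i j : Fin n, (Wᵀ * W₁) i j = a ((i:ℕ) + 2 * (j:ℕ)) := by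
    intro i j
    rw [mul_apply, ← hdot (i:ℕ) (2 * (j:ℕ))]
    apply Finset.sum_congr rfl
    intro k _
    rw [transpose_apply, hW, hW₁]
    rfl
  -- mod 2 matrices
  set Wb : Matrix (Fin n) (Fin n) (ZMod 2) := W.map (Int.cast : ℤ → ZMod 2) with hWb_def
  set Mb : Matrix (Fin n) (Fin n) (ZMod 2) := M.map (Int.cast : ℤ → ZMod 2) with hMb_def
  have hWbtWb : Wbᵀ * Wb = 0 := by
    rw [hWb_def, ← Matrix.transpose_map, ← cast_mm2]
    ext i j
    rw [Matrix.map_apply, hWtW i j]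
    show ((a ((i:ℕ) + (j:ℕ)) : ℤ) : ZMod 2) = 0
    rw [ZMod.intCast_zmod_eq_zero_iff_dvd]
    exact_mod_cast even_iff_two_dvd.mp (ha_even _)
  have hWbtMb : Wbᵀ * Mb = 0 := by
    rw [hWb_def, hMb_def, ← Matrix.transpose_map, ← cast_mm2]
    ext i j
    rw [Matrix.map_apply]
    have h1 : (Wᵀ * M) i j = (Mᵀ * W) j i := by
      rw [mul_apply, mul_apply]
      apply Finset.sum_congr rfl
      intro k _
      rw [transpose_apply, transpose_apply]
      ring
    rw [h1, hMWint j i]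
    show (((ℓ:ℤ) * ((B ^ (i:ℕ)).mulVec eZ) j : ℤ) : ZMod 2) = 0
    rw [ZMod.intCast_zmod_eq_zero_iff_dvd]
    have : (2:ℤ) ∣ (ℓ:ℤ) := by
      refine ⟨(d:ℤ), ?_⟩
      push_cast [hd2]
      ring
    exact Dvd.dvd.mul_right this _
  -- rank argument: range Wb = ker Wbᵀ
  have hkey_sub : LinearMap.range Wb.mulVecLin = LinearMap.ker (Wbᵀ).mulVecLin := by
    have hle : LinearMap.range Wb.mulVecLin ≤ LinearMap.ker (Wbᵀ).mulVecLin := by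
      rintro x ⟨cx, rfl⟩
      rw [LinearMap.mem_ker]
      show (Wbᵀ).mulVec (Wb.mulVec cx) = 0
      rw [mulVec_mulVec, hWbtWb, zero_mulVec]
    have hfin : Module.finrank (ZMod 2) (Fin n → ZMod 2) = n := by
      simp [Module.finrank_pi]
    have hrk : Wb.rank = (n+1)/2 := hrank
    have hr1 : Module.finrank (ZMod 2) (LinearMap.range Wb.mulVecLin) = (n+1)/2 := hrk
    have hr2 : Module.finrank (ZMod 2) (LinearMap.range (Wbᵀ).mulVecLin) = (n+1)/2 := by
      have := Matrix.rank_transpose Wb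
      rw [hrk] at this
      exact this
    have hrn := LinearMap.finrank_range_add_finrank_ker (Wbᵀ).mulVecLin
    rw [hfin, hr2] at hrn
    have hneven : Even n := by exact_mod_cast hn_even
    obtain ⟨k, hk⟩ := hneven
    have hkk : (n+1)/2 = k := by omega
    have hker_rank : Module.finrank (ZMod 2) (LinearMap.ker (Wbᵀ).mulVecLin) = k := by omega
    apply Submodule.eq_of_le_of_finrank_le hle
    rw [hker_rank, hr1, hkk]
  -- pick an odd entry of M
  obtain ⟨i1, j0, hodd_entry⟩ := hModd
  set z : Fin n → ℤ := fun t => if t = j0 then 1 else 0 with hz_def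
  set u : Fin n → ℤ := M.mulVec z with hu_def
  have hu_col : ∀ i, u i = M i j0 := by
    intro i
    rw [hu_def]
    show ∑ t, M i t * z t = M i j0
    rw [hz_def]
    simp only [mul_ite, mul_one, mul_zero]
    rw [Finset.sum_ite_eq' Finset.univ j0 (fun t => M i t)]
    simp
  -- u mod 2 lies in the range of Wb
  have hu_mem : (fun i => ((u i : ZMod 2))) ∈ LinearMap.range Wb.mulVecLin := by
    rw [hkey_sub, LinearMap.mem_ker]
    show (Wbᵀ).mulVec (fun i => ((u i : ZMod 2))) = 0
    have h1 : (fun i => ((u i : ZMod 2))) = Mb.mulVec (fun t => ((z t : ZMod 2))) := by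
      funext i
      rw [hu_def]
      exact cast_mulVec_z2 M z i
    rw [h1, mulVec_mulVec, hWbtMb, zero_mulVec]
  obtain ⟨cb, hcb⟩ := hu_mem
  -- integer lift of cb
  set c : Fin n → ℤ := fun i => ((cb i).val : ℤ) with hc_def
  have hc2 : ∀ i, ((c i : ZMod 2)) = cb i := by
    intro i
    rw [hc_def]
    show (((cb i).val : ℤ) : ZMod 2) = cb i
    push_cast
    simp [ZMod.natCast_val]
  -- the vector y = W c and the half-difference r
  set y : Fin n → ℤ := W.mulVec c with hy_def
  have hyu : ∀ s, ((y s : ZMod 2)) = ((u s : ZMod 2)) := by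
    intro s
    rw [hy_def]
    rw [cast_mulVec_z2 W c s]
    have h1 : (fun j => ((c j : ZMod 2))) = cb := funext hc2
    rw [h1]
    have h2 : Wb.mulVec cb = (fun i => ((u i : ZMod 2))) := hcb
    rw [hWb_def] at h2
    rw [congrFun h2 s]
  set r : Fin n → ℤ := fun s => (y s - u s) / 2 with hr_def
  have hyr : ∀ s, y s = u s + 2 * r s := by
    intro s
    have hdvd : (2:ℤ) ∣ y s - u s := by
      have : ((y s - u s : ℤ) : ZMod 2) = 0 := by
        push_cast
        rw [hyu s]
        ring
      exact_mod_cast (ZMod.intCast_zmod_eq_zero_iff_dvd _ 2).mp this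
    have h2 := Int.mul_ediv_cancel' hdvd
    have h3 : r s = (y s - u s) / 2 := rfl
    omega
  have hy_eq : y = u + (2:ℤ) • r := by
    funext s
    rw [hyr s]
    simp [Pi.add_apply, Pi.smul_apply, smul_eq_mul]
  -- KEY: 4 divides (WᵀW₁) c
  have key : ∀ i : Fin n, (4:ℤ) ∣ ((Wᵀ * W₁).mulVec c) i := by
    intro i
    set t : ℕ := (i : ℕ) with ht_def
    have htarget : ((Wᵀ * W₁).mulVec c) i = ∑ j : Fin n, a (t + 2 * (j:ℕ)) * c j := by
      show ∑ j, (Wᵀ * W₁) i j * c j = _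
      apply Finset.sum_congr rfl
      intro j _
      rw [hWtW1 i j]
    -- the Gram-type matrix G
    set G : Matrix (Fin n) (Fin n) ℤ := Wᵀ * (A ^ t * W) with hG_def
    have hGentry : ∀ p q : Fin n, G p q = a ((p:ℕ) + (t + (q:ℕ))) := by
      intro p q
      have hcolq : (fun s => W s q) = (A ^ (q:ℕ)).mulVec eZ := by
        funext s; rw [hW]; rfl
      have hAW : ∀ s, (A ^ t * W) s q = ((A ^ (t + (q:ℕ))).mulVec eZ) s := by
        intro s
        have h1 : (A ^ t * W) s q = ((A ^ t).mulVec (fun r => W r q)) s := by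
          simp [mul_apply, mulVec, dotProduct]
        rw [h1, hcolq, mulVec_mulVec, ← pow_add]
      rw [hG_def]
      show ∑ s, Wᵀ p s * (A ^ t * W) s q = _
      rw [← hdot (p:ℕ) (t + (q:ℕ))]
      apply Finset.sum_congr rfl
      intro s _
      rw [transpose_apply, hAW s, hW]
      rfl
    have hCG : c ⬝ᵥ G.mulVec c = y ⬝ᵥ (A ^ t).mulVec y := by
      calc c ⬝ᵥ G.mulVec c
          = c ⬝ᵥ (Wᵀ.mulVec ((A ^ t).mulVec (W.mulVec c))) := by
            rw [hG_def, ← mulVec_mulVec, ← mulVec_mulVec]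
        _ = (Matrix.vecMul c Wᵀ) ⬝ᵥ ((A ^ t).mulVec (W.mulVec c)) :=
            dotProduct_mulVec c Wᵀ _
        _ = y ⬝ᵥ (A ^ t).mulVec y := by rw [vecMul_transpose, ← hy_def]
    -- split G into diagonal and off-diagonal parts
    set H : Matrix (Fin n) (Fin n) ℤ :=
      Matrix.of (fun p q => if p = q then (0:ℤ) else a ((p:ℕ) + (t + (q:ℕ)))) with hH_def
    set H' : Matrix (Fin n) (Fin n) ℤ :=
      Matrix.of (fun p q => if p = q then (0:ℤ) else a ((p:ℕ) + (t + (q:ℕ))) / 2) with hH'_def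
    have hH2 : H = (2:ℤ) • H' := by
      ext p q
      show (if p = q then (0:ℤ) else a ((p:ℕ) + (t + (q:ℕ))))
        = 2 * (if p = q then (0:ℤ) else a ((p:ℕ) + (t + (q:ℕ))) / 2)
      split_ifs
      · ring
      · exact ha2 _
    have hH'symm : ∀ p q : Fin n, H' p q = H' q p := by
      intro p q
      show (if p = q then (0:ℤ) else a ((p:ℕ) + (t + (q:ℕ))) / 2)
        = (if q = p then (0:ℤ) else a ((q:ℕ) + (t + (p:ℕ))) / 2)
      by_cases h : p = q
      · rw [if_pos h, if_pos h.symm]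
      · rw [if_neg h, if_neg (Ne.symm h)]
        have : (p:ℕ) + (t + (q:ℕ)) = (q:ℕ) + (t + (p:ℕ)) := by omega
        rw [this]
    have hH'diag : ∀ p : Fin n, H' p p = 0 := by
      intro p
      show (if p = p then (0:ℤ) else _) = 0
      rw [if_pos rfl]
    have hHquad : (4:ℤ) ∣ c ⬝ᵥ H.mulVec c := by
      rw [hH2, Matrix.smul_mulVec, dotProduct_smul, smul_eq_mul]
      obtain ⟨w, hw⟩ := even_quad H' hH'symm hH'diag c
      exact ⟨w, by rw [hw]; ring⟩
    have hGH : G.mulVec c = H.mulVec c + fun p : Fin n => a ((p:ℕ) + (t + (p:ℕ))) * c p := by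
      funext p
      show ∑ q, G p q * c q = (∑ q, H p q * c q) + a ((p:ℕ) + (t + (p:ℕ))) * c p
      have hterm : ∀ q : Fin n, G p q * c q
          = H p q * c q + (if q = p then a ((p:ℕ) + (t + (q:ℕ))) * c q else 0) := by
        intro q
        by_cases h : p = q
        · subst h
          have hHpp : H p p = 0 := by
            show (if p = p then (0:ℤ) else _) = 0
            rw [if_pos rfl]
          rw [hHpp, hGentry p p, if_pos rfl]
          ring
        · have hHpq : H p q = G p q := by
            show (if p = q then (0:ℤ) else a ((p:ℕ) + (t + (q:ℕ)))) = G p q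
            rw [if_neg h, hGentry p q]
          rw [hHpq, if_neg (fun hh => h hh.symm)]
          ring
      rw [Finset.sum_congr rfl (fun q _ => hterm q), Finset.sum_add_distrib,
        Finset.sum_ite_eq' Finset.univ p (fun q => a ((p:ℕ) + (t + (q:ℕ))) * c q)]
      simp
    have hdot_split : c ⬝ᵥ G.mulVec c
        = c ⬝ᵥ H.mulVec c + ∑ p : Fin n, c p * (a ((p:ℕ) + (t + (p:ℕ))) * c p) := by
      rw [hGH, dotProduct_add]
      rfl
    have hdiag_mod : (4:ℤ) ∣ ((∑ p : Fin n, c p * (a ((p:ℕ) + (t + (p:ℕ))) * c p))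
        - ∑ j : Fin n, a (t + 2 * (j:ℕ)) * c j) := by
      rw [← Finset.sum_sub_distrib]
      apply Finset.dvd_sum
      intro p _
      have hexp : (p:ℕ) + (t + (p:ℕ)) = t + 2 * (p:ℕ) := by omega
      rw [hexp]
      obtain ⟨w, hw⟩ := hsqsub (c p)
      set α : ℤ := a (t + 2 * (p:ℕ)) / 2 with hα
      refine ⟨α * w, ?_⟩
      have hA2 : a (t + 2 * (p:ℕ)) = 2 * α := by rw [hα]; exact ha2 _
      have h1 : c p * (a (t + 2 * (p:ℕ)) * c p) - a (t + 2 * (p:ℕ)) * c p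
          = a (t + 2 * (p:ℕ)) * (c p * c p - c p) := by ring
      rw [h1, hw, hA2]
      ring
    have hyA : y ⬝ᵥ (A ^ t).mulVec y
        = u ⬝ᵥ (A ^ t).mulVec u
          + 4 * (u ⬝ᵥ (A ^ t).mulVec r + r ⬝ᵥ (A ^ t).mulVec r) := by
      rw [hy_eq]
      simp only [mulVec_add, Matrix.mulVec_smul, dotProduct_add, add_dotProduct,
        smul_dotProduct, dotProduct_smul, smul_eq_mul]
      rw [hswapdot t r u]
      ring
    have huA : u ⬝ᵥ (A ^ t).mulVec u = (ℓ:ℤ)^2 * (B ^ t) j0 j0 := by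
      have h1 : u ⬝ᵥ (A ^ t).mulVec u = z ⬝ᵥ ((Mᵀ * (A ^ t * M)).mulVec z) := by
        calc u ⬝ᵥ (A ^ t).mulVec u
            = (Matrix.vecMul z Mᵀ) ⬝ᵥ ((A ^ t).mulVec u) := by rw [vecMul_transpose, ← hu_def]
          _ = z ⬝ᵥ (Mᵀ.mulVec ((A ^ t).mulVec u)) := (dotProduct_mulVec z Mᵀ _).symm
          _ = z ⬝ᵥ ((Mᵀ * (A ^ t * M)).mulVec z) := by
              rw [hu_def, mulVec_mulVec, mulVec_mulVec, Matrix.mul_assoc]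
      have h2 : z ⬝ᵥ ((Mᵀ * (A ^ t * M)).mulVec z) = (Mᵀ * (A ^ t * M)) j0 j0 := by
        set N := Mᵀ * (A ^ t * M) with hN_def
        have h3 : N.mulVec z j0 = N j0 j0 := by
          show ∑ q, N j0 q * z q = N j0 j0
          rw [hz_def]
          simp only [mul_ite, mul_one, mul_zero]
          rw [Finset.sum_ite_eq' Finset.univ j0 (fun q => N j0 q)]
          simp
        have h4 : z ⬝ᵥ N.mulVec z = N.mulVec z j0 := by
          show ∑ p, z p * N.mulVec z p = N.mulVec z j0
          rw [hz_def]
          simp only [ite_mul, one_mul, zero_mul]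
          rw [Finset.sum_ite_eq' Finset.univ j0 (fun p => N.mulVec z p)]
          simp
          rfl
        rw [h4, h3]
      rw [h1, h2, ← Matrix.mul_assoc, hMAMint t j0 j0]
    have hu4 : (4:ℤ) ∣ (ℓ:ℤ)^2 * (B ^ t) j0 j0 := by
      refine ⟨(d:ℤ)^2 * (B ^ t) j0 j0, ?_⟩
      have : (ℓ:ℤ) = 2 * (d:ℤ) := by push_cast [hd2]; ring
      rw [this]
      ring
    -- assemble with omega
    have e1 := htarget
    have e2 := hdot_split
    have e3 := hCG
    have e4 := hyA
    have e5 := huA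
    set T1 := ((Wᵀ * W₁).mulVec c) i
    set T2 := ∑ j : Fin n, a (t + 2 * (j:ℕ)) * c j
    set T3 := c ⬝ᵥ G.mulVec c
    set T4 := c ⬝ᵥ H.mulVec c
    set T5 := ∑ p : Fin n, c p * (a ((p:ℕ) + (t + (p:ℕ))) * c p)
    set T6 := y ⬝ᵥ (A ^ t).mulVec y
    set T7 := u ⬝ᵥ (A ^ t).mulVec u
    set T8 := u ⬝ᵥ (A ^ t).mulVec r + r ⬝ᵥ (A ^ t).mulVec r
    set T9 := (ℓ:ℤ)^2 * (B ^ t) j0 j0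
    omega
  -- conclude via hker
  have hSc : ((Matrix.of fun (i j : Fin n) => (Wᵀ * W₁) i j / 2).map
      (Int.cast : ℤ → ZMod 2)).mulVec cb = 0 := by
    funext i
    show ∑ j, (((Wᵀ * W₁) i j / 2 : ℤ) : ZMod 2) * cb j = (0 : ZMod 2)
    have hstep : ∀ j : Fin n, (((Wᵀ * W₁) i j / 2 : ℤ) : ZMod 2) * cb j
        = ((((Wᵀ * W₁) i j / 2) * c j : ℤ) : ZMod 2) := by
      intro j
      rw [← hc2 j]
      push_cast
      ring
    rw [Finset.sum_congr rfl (fun j _ => hstep j), ← Int.cast_sum]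
    rw [ZMod.intCast_zmod_eq_zero_iff_dvd]
    have h2P : 2 * (∑ j, ((Wᵀ * W₁) i j / 2) * c j) = ((Wᵀ * W₁).mulVec c) i := by
      rw [Finset.mul_sum]
      show _ = ∑ j, (Wᵀ * W₁) i j * c j
      apply Finset.sum_congr rfl
      intro j _
      have := Int.mul_ediv_cancel' (even_iff_two_dvd.mp (hEven i j))
      calc 2 * ((Wᵀ * W₁) i j / 2 * c j) = (2 * ((Wᵀ * W₁) i j / 2)) * c j := by ring
      _ = (Wᵀ * W₁) i j * c j := by rw [this]
    have h4 := key i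
    omega
  have hfinal := hker cb hSc
  -- contradiction: column j0 of M is even
  have hWbcb : (W.map (Int.cast : ℤ → ZMod 2)).mulVec cb = (fun i => ((u i : ZMod 2))) := hcb
  rw [hfinal] at hWbcb
  have hu0 : ((u i1 : ZMod 2)) = 0 := (congrFun hWbcb i1).symm
  have : (2:ℤ) ∣ M i1 j0 := by
    rw [← hu_col i1]
    exact_mod_cast (ZMod.intCast_zmod_eq_zero_iff_dvd _ 2).mp hu0
  exact hodd_entry this
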